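/- Let (R, m) be a Noetherian local ring of prime characteristic p, let f₁, …, f_d be a regular sequence generating an m-primary ideal I, and write I^{[l]} = (f₁^l, …, f_d^l). For a fixed n ≥ 1 define, for each l ≥ 1, the ideal J_l = I^{[l]} : (I^{[l]})^{*I^n}, where (I^{[l]})^{*I^n} denotes the I^n-tight closure of I^{[l]}. Then J_{l+1} ⊆ J_l for all l ≥ 1; i.e., the sequence of colon ideals is non-increasing in l. -/

import Mathlib

/-- The complement of the union of the minimal primes of `R`. -/
def ringReg (R : Type*) [CommRing R] : Set R :=
  {c | ∀ P ∈ minimalPrimes R, c ∉ P}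

/-- The `q`-th Frobenius power `J^{[q]}` of an ideal. -/
def frobPow {R : Type*} [CommRing R] (J : Ideal R) (q : ℕ) : Ideal R :=
  Ideal.span ((fun x => x ^ q) '' (J : Set R))

/-- The `a`-tight closure of an ideal `J` in a ring of characteristic `p`:
`{ z : ∃ c ∈ R⁰, c·a^q·z^q ⊆ J^{[q]} for all q = p^e ≫ 1 }`. -/
def aTightClosure {R : Type*} [CommRing R] (p : ℕ) (a J : Ideal R) : Set R :=
  {z | ∃ c ∈ ringReg R, ∃ E : ℕ, ∀ e ≥ E, ∀ y ∈ a ^ (p ^ e),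
    c * y * z ^ (p ^ e) ∈ frobPow J (p ^ e)}

section Aux
set_option linter.unusedSectionVars false
open RingTheory.Sequence Submodule IsLocalRing

section Aux
variable {R : Type u_1} [CommRing R] [IsNoetherianRing R] [IsLocalRing R]

lemma myPerm {M : Type v} [AddCommGroup M] [Module R M] [IsNoetherian R M]
    {rs rs' : List R} (h1 : IsWeaklyRegular M rs) (h2 : List.Perm rs rs')
    (h3 : ∀ r ∈ rs, r ∈ maximalIdeal R) : IsWeaklyRegular M rs' :=
  IsLocalRing.isWeaklyRegular_of_perm_of_subset_maximalIdeal h1 h2 h3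

lemma myComp (t : List R) : ∀ {M : Type v} [AddCommGroup M] [Module R M] [IsNoetherian R M]
    (x y : R), x ∈ maximalIdeal R → y ∈ maximalIdeal R → (∀ r ∈ t, r ∈ maximalIdeal R) →
    IsWeaklyRegular M (x :: t) → IsWeaklyRegular M (y :: t) →
    IsWeaklyRegular M (x * y :: t) := by
  induction t with
  | nil =>
    intro M _ _ _ x y _ _ _ h1 h2
    rw [isWeaklyRegular_singleton_iff] at h1 h2 ⊢
    exact h1.mul h2
  | cons z u ih =>
    intro M _ _ _ x y hx hy ht h1 h2
    have hz : z ∈ maximalIdeal R := ht z List.mem_cons_self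
    have hu : ∀ r ∈ u, r ∈ maximalIdeal R := fun r hr => ht r (List.mem_cons_of_mem z hr)
    have p1 : IsWeaklyRegular M (z :: x :: u) :=
      myPerm h1 (List.Perm.swap z x u) (by
        intro r hr
        rcases List.mem_cons.mp hr with rfl | hr
        · exact hx
        · exact ht r hr)
    have p2 : IsWeaklyRegular M (z :: y :: u) :=
      myPerm h2 (List.Perm.swap z y u) (by
        intro r hr
        rcases List.mem_cons.mp hr with rfl | hr
        · exact hy
        · exact ht r hr)
    rw [isWeaklyRegular_cons_iff] at p1 p2
    have key : IsWeaklyRegular M (z :: x * y :: u) := by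
      rw [isWeaklyRegular_cons_iff]
      exact ⟨p1.1, ih x y hx hy hu p1.2 p2.2⟩
    refine myPerm key (List.Perm.swap (x*y) z u) ?_
    intro r hr
    rcases List.mem_cons.mp hr with rfl | hr
    · exact hz
    rcases List.mem_cons.mp hr with rfl | hr
    · exact Ideal.mul_mem_right _ _ hx
    · exact hu r hr

lemma myPowFirst {M : Type v} [AddCommGroup M] [Module R M] [IsNoetherian R M]
    (x : R) (t : List R) (a : ℕ) (ha : 1 ≤ a) (hx : x ∈ maximalIdeal R)
    (ht : ∀ r ∈ t, r ∈ maximalIdeal R) (h : IsWeaklyRegular M (x :: t)) :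
    IsWeaklyRegular M (x ^ a :: t) := by
  induction a with
  | zero => omega
  | succ a iha =>
    rcases Nat.eq_or_lt_of_le ha with h1 | h1
    · simpa [← h1] using h
    · have := myComp t x (x ^ a) hx (Ideal.pow_mem_of_mem _ hx a (by omega))
        ht h (iha (by omega))
      simpa [pow_succ, mul_comm] using this

set_option maxHeartbeats 1000000 in
lemma myPowExt (t : List R) : ∀ (s : List R) {M : Type v} [AddCommGroup M] [Module R M]
    [IsNoetherian R M] (l : ℕ), 1 ≤ l → (∀ r ∈ t ++ s, r ∈ maximalIdeal R) →
    IsWeaklyRegular M (t ++ s) → IsWeaklyRegular M (t.map (· ^ l) ++ s) := by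
  induction t with
  | nil => intro s M _ _ _ l hl hm h; simpa using h
  | cons x t ih =>
    intro s M _ _ _ l hl hm h
    have hx : x ∈ maximalIdeal R := hm x (by simp)
    have h' : IsWeaklyRegular M (x ^ l :: (t ++ s)) :=
      myPowFirst x (t ++ s) l hl hx (fun r hr => hm r (by simpa using Or.inr hr))
        (by simpa using h)
    rw [isWeaklyRegular_cons_iff] at h'
    rw [List.map_cons, List.cons_append, isWeaklyRegular_cons_iff]
    exact ⟨h'.1, ih s l hl (fun r hr => hm r (by simpa using Or.inr (by simpa using hr))) h'.2⟩

lemma mem_span_singleton_smul_top {M : Type v} [AddCommGroup M] [Module R M]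
    (a : R) (u : M) (hu : u ∈ Ideal.span {a} • (⊤ : Submodule R M)) :
    ∃ w : M, u = a • w := by
  have : Ideal.span {a} • (⊤ : Submodule R M) ≤ LinearMap.range (LinearMap.lsmul R M a) := by
    rw [Submodule.smul_le]
    intro r hr m _
    obtain ⟨c, rfl⟩ := Ideal.mem_span_singleton'.mp hr
    exact ⟨c • m, by simp [mul_smul, smul_comm a c m]⟩
  obtain ⟨w, hw⟩ := this hu
  exact ⟨w, by simpa using hw.symm⟩

set_option maxHeartbeats 1000000 in
lemma myColon (t : List R) : ∀ {M : Type v} [AddCommGroup M] [Module R M]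
    [IsNoetherian R M] (l : ℕ), 1 ≤ l → (∀ r ∈ t, r ∈ maximalIdeal R) →
    IsWeaklyRegular M t → ∀ m₀ : M,
    t.prod • m₀ ∈ Ideal.ofList (t.map (· ^ (l+1))) • (⊤ : Submodule R M) →
    m₀ ∈ Ideal.ofList (t.map (· ^ l)) • (⊤ : Submodule R M) := by
  induction t with
  | nil =>
    intro M _ _ _ l _ _ _ m₀ hm
    simpa using hm
  | cons x t ih =>
    intro M _ _ _ l hl hmem h m₀ hm
    have hx : x ∈ maximalIdeal R := hmem x (by simp)
    have hxl1 : x ^ (l+1) ∈ maximalIdeal R := Ideal.pow_mem_of_mem _ hx _ (by omega)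
    have ht : ∀ r ∈ t, r ∈ maximalIdeal R := fun r hr => hmem r (List.mem_cons_of_mem x hr)
    -- x^{l+1} :: t is weakly regular
    have h1 : IsWeaklyRegular M (x ^ (l+1) :: t) :=
      myPowFirst x t (l+1) (by omega) hx ht h
    have h1' : IsWeaklyRegular M ([x ^ (l+1)] ++ t) := by simpa using h1
    rw [isWeaklyRegular_append_iff] at h1'
    -- the quotient module
    set N : Submodule R M := Ideal.ofList [x ^ (l+1)] • ⊤ with hN
    have htq : IsWeaklyRegular (M ⧸ N) t := h1'.2
    -- push hypothesis to quotient
    have hfact : t.prod • (N.mkQ (x • m₀)) ∈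
        Ideal.ofList (t.map (· ^ (l+1))) • (⊤ : Submodule R (M ⧸ N)) := by
      have e1 : t.prod • (N.mkQ (x • m₀)) = N.mkQ ((x :: t).prod • m₀) := by
        simp only [List.prod_cons, mul_comm, mul_smul, map_smul]
        rw [smul_comm]
      rw [e1]
      have : Ideal.ofList ((x :: t).map (· ^ (l+1))) • (⊤ : Submodule R M) =
          N ⊔ Ideal.ofList (t.map (· ^ (l+1))) • (⊤ : Submodule R M) := by
        rw [List.map_cons, Ideal.ofList_cons, Submodule.sup_smul, hN]
        simp [Ideal.ofList_singleton]
      rw [this] at hm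
      rcases Submodule.mem_sup.mp hm with ⟨u, hu, v, hv, huv⟩
      have : N.mkQ ((x :: t).prod • m₀) = N.mkQ v := by
        rw [← huv, map_add]
        have hz : N.mkQ u = 0 := (Submodule.Quotient.mk_eq_zero N).mpr hu
        rw [hz, zero_add]
      rw [this]
      have e2 : Ideal.ofList (t.map (· ^ (l+1))) • (⊤ : Submodule R (M ⧸ N)) =
          Submodule.map N.mkQ (Ideal.ofList (t.map (· ^ (l+1))) • ⊤) := by
        rw [Submodule.map_smul'', Submodule.map_top, Submodule.range_mkQ]
      rw [e2]
      exact Submodule.mem_map_of_mem hv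
    have hq := ih l hl ht htq (N.mkQ (x • m₀)) hfact
    -- pull back
    set J : Ideal R := Ideal.ofList (t.map (· ^ l)) with hJ
    have hpull : x • m₀ ∈ J • (⊤ : Submodule R M) ⊔ N := by
      have : J • (⊤ : Submodule R (M ⧸ N)) = Submodule.map N.mkQ (J • ⊤) := by
        rw [Submodule.map_smul'', Submodule.map_top, Submodule.range_mkQ]
      rw [this] at hq
      have := Submodule.comap_map_mkQ N (J • ⊤)
      have h2 : x • m₀ ∈ Submodule.comap N.mkQ (Submodule.map N.mkQ (J • ⊤)) := hq
      rw [Submodule.comap_map_mkQ] at h2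
      rwa [sup_comm] at h2
    rcases Submodule.mem_sup.mp hpull with ⟨v, hv, u, hu, huv⟩
    have hu' : u ∈ Ideal.span {x ^ (l+1)} • (⊤ : Submodule R M) := by
      simpa [hN, Ideal.ofList_singleton] using hu
    obtain ⟨w, rfl⟩ := mem_span_singleton_smul_top _ u hu'
    -- x • (m₀ - x^l • w) ∈ J • ⊤
    have hkey : x • (m₀ - x ^ l • w) ∈ J • (⊤ : Submodule R M) := by
      have : x • (m₀ - x ^ l • w) = v := by
        rw [smul_sub, smul_smul, ← pow_succ']
        rw [← huv]; abel
      rwa [this]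
    -- x is regular modulo J • ⊤
    have h2 : IsWeaklyRegular M (t.map (· ^ l) ++ [x]) := by
      refine myPowExt t [x] l hl ?_ ?_
      · intro r hr
        rcases List.mem_append.mp hr with hr | hr
        · exact ht r hr
        · simp at hr; subst hr; exact hx
      · exact myPerm h (List.Perm.symm (List.perm_append_singleton x t)) hmem
    rw [isWeaklyRegular_append_iff] at h2
    have hreg : IsSMulRegular (M ⧸ (J • (⊤ : Submodule R M))) x := by
      have := h2.2
      rw [isWeaklyRegular_singleton_iff] at this
      exact this
    have hsub : m₀ - x ^ l • w ∈ J • (⊤ : Submodule R M) := by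
      have e0 : (J • (⊤ : Submodule R M)).mkQ (x • (m₀ - x ^ l • w)) = 0 :=
        (Submodule.Quotient.mk_eq_zero _).mpr hkey
      have e1 : x • ((J • (⊤ : Submodule R M)).mkQ (m₀ - x ^ l • w)) = x • (0 : M ⧸ (J • (⊤ : Submodule R M))) := by
        rw [smul_zero, ← map_smul]; exact e0
      have := hreg e1
      rwa [← Submodule.Quotient.mk_eq_zero, ← Submodule.mkQ_apply]
    -- conclude
    have hfin : Ideal.ofList ((x :: t).map (· ^ l)) • (⊤ : Submodule R M) =
        Ideal.span {x ^ l} • (⊤ : Submodule R M) ⊔ J • ⊤ := by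
      rw [List.map_cons, Ideal.ofList_cons, Submodule.sup_smul]
    rw [hfin]
    have hm1 : x ^ l • w ∈ Ideal.span {x ^ l} • (⊤ : Submodule R M) :=
      Submodule.smul_mem_smul (Ideal.mem_span_singleton_self _) trivial
    have : m₀ = x ^ l • w + (m₀ - x ^ l • w) := by abel
    rw [this]
    exact Submodule.add_mem_sup hm1 hsub



lemma ringColon {R : Type u_1} [CommRing R] [IsNoetherianRing R] [IsLocalRing R]
    (t : List R) (l : ℕ) (hl : 1 ≤ l)
    (hmem : ∀ r ∈ t, r ∈ IsLocalRing.maximalIdeal R) (h : RingTheory.Sequence.IsWeaklyRegular R t) (r : R)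
    (hr : t.prod * r ∈ Ideal.ofList (t.map (· ^ (l+1)))) :
    r ∈ Ideal.ofList (t.map (· ^ l)) := by
  have key := myColon t (M := R) l hl hmem h r
  have e : ∀ I : Ideal R, I • (⊤ : Submodule R R) = I := fun I => by
    rw [smul_eq_mul, Ideal.mul_top]
  rw [e, e] at key
  exact key (by simpa [smul_eq_mul] using hr)

end Aux

/-- Let `(R,m)` be Noetherian local of characteristic `p`, `f₁, …, f_d` a regular
sequence generating an `m`-primary ideal `I`, and `I^{[l]} = (f₁^l, …, f_d^l)`.  For
fixed `n ≥ 1`, the colon ideals `J_l = I^{[l]} : (I^{[l]})^{*I^n}` satisfy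
`J_{l+1} ⊆ J_l` for all `l ≥ 1`. -/
theorem stmt10 {R : Type*} [CommRing R] [IsNoetherianRing R] [IsLocalRing R]
    (p : ℕ) (hp : p.Prime) [CharP R p]
    {d : ℕ} (f : Fin d → R)
    (hreg : RingTheory.Sequence.IsRegular R (List.ofFn f))
    (hprim : (Ideal.span (Set.range f)).radical = IsLocalRing.maximalIdeal R)
    (n : ℕ) (hn : 1 ≤ n) (l : ℕ) (hl : 1 ≤ l) :
    {r : R | ∀ z ∈ aTightClosure p ((Ideal.span (Set.range f)) ^ n)
        (Ideal.span (Set.range fun i => f i ^ (l + 1))),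
        r * z ∈ Ideal.span (Set.range fun i => f i ^ (l + 1))} ⊆
      {r : R | ∀ z ∈ aTightClosure p ((Ideal.span (Set.range f)) ^ n)
        (Ideal.span (Set.range fun i => f i ^ l)),
        r * z ∈ Ideal.span (Set.range fun i => f i ^ l)} := by
  intro r hr z hz
  set Jl : Ideal R := Ideal.span (Set.range fun i => f i ^ l) with hJl
  set Jl1 : Ideal R := Ideal.span (Set.range fun i => f i ^ (l+1)) with hJl1
  set F : R := (List.ofFn f).prod with hF
  -- F * Jl ⊆ Jl1
  have mulF : ∀ b ∈ Jl, F * b ∈ Jl1 := by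
    intro b hb
    induction hb using Submodule.span_induction with
    | mem a ha =>
      obtain ⟨i, rfl⟩ := ha
      have hfi : f i ∈ List.ofFn f := List.mem_ofFn.mpr ⟨i, rfl⟩
      obtain ⟨g, hg⟩ := List.dvd_prod hfi
      have : F * f i ^ l = f i ^ (l+1) * g := by
        rw [hF, hg, pow_succ]; ring
      rw [this]
      exact Ideal.mul_mem_right g _ (Ideal.subset_span ⟨i, rfl⟩)
    | zero => simpa using Jl1.zero_mem
    | add a b _ _ iha ihb => rw [mul_add]; exact Jl1.add_mem iha ihb
    | smul c a _ iha =>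
      rw [smul_eq_mul, show F * (c * a) = c * (F * a) by ring]
      exact Ideal.mul_mem_left _ _ iha
  -- Frobenius step
  have frobStep : ∀ (q : ℕ) (w : R), w ∈ frobPow Jl q → F ^ q * w ∈ frobPow Jl1 q := by
    intro q w hw
    induction hw using Submodule.span_induction with
    | mem a ha =>
      obtain ⟨b, hb, rfl⟩ := ha
      rw [← mul_pow]
      exact Ideal.subset_span ⟨F * b, mulF b hb, rfl⟩
    | zero => simpa using (frobPow Jl1 q).zero_mem
    | add a b _ _ iha ihb => rw [mul_add]; exact add_mem iha ihb
    | smul c a _ iha =>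
      rw [smul_eq_mul, show F ^ q * (c * a) = c * (F ^ q * a) by ring]
      exact Ideal.mul_mem_left _ _ iha
  -- F * z is in the tight closure of Jl1
  obtain ⟨c, hc, E, hE⟩ := hz
  have hFz : F * z ∈ aTightClosure p ((Ideal.span (Set.range f)) ^ n) Jl1 := by
    refine ⟨c, hc, E, fun e he y hy => ?_⟩
    have h0 := hE e he y hy
    rw [show c * y * (F * z) ^ p ^ e = F ^ p ^ e * (c * y * z ^ p ^ e) by rw [mul_pow]; ring]
    exact frobStep _ _ h0
  have h2 : r * (F * z) ∈ Jl1 := hr (F * z) hFz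
  -- now apply the colon theorem
  have hmax : ∀ i, f i ∈ IsLocalRing.maximalIdeal R := by
    intro i
    rw [← hprim]
    exact Ideal.le_radical (Ideal.subset_span ⟨i, rfl⟩)
  have hofList : ∀ k : ℕ, Ideal.ofList ((List.ofFn f).map (· ^ k)) =
      Ideal.span (Set.range fun i => f i ^ k) := by
    intro k
    unfold Ideal.ofList
    congr 1
    ext x
    simp [List.mem_map, List.mem_ofFn]
  have key := ringColon (List.ofFn f) l hl
    (fun x hx => by obtain ⟨i, rfl⟩ := List.mem_ofFn.mp hx; exact hmax i)
    hreg.toIsWeaklyRegular (r * z)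
    (by rw [hofList, show (List.ofFn f).prod * (r * z) = r * (F * z) by rw [hF]; ring]
        exact h2)
  rw [hofList] at key
  exact key
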